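/- Fix a weight function f : rows(A) → ℕ on the rows of a binary matrix A with n columns, and let A' be A with an appended zero column. For any tour of the columns of A' under the weighted Hamming distance D(c,c') = Σ_k f(k)·|c(k) − c'(k)|, the tour length equals 2·Σ_k f(k)·cons1(r_k^{π(A)}), where π is the column permutation of A read from the tour starting after the zero column. Consequently, a minimum-length tour yields a permutation minimizing Σ_k f(k)·cons1(r_k^{π(A)}). -/

import Mathlib

open Finset

/-- Extend a row of length `n` by zeros to an `ℕ`-indexed row. -/
def rowExt (n : ℕ) (r : Fin n → Bool) : ℕ → Bool :=
  fun j => if h : j < n then r ⟨j, h⟩ else false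

/-- The number of maximal blocks of consecutive ones in a row. -/
def cons1Row (n : ℕ) (r : Fin n → Bool) : ℕ :=
  ((Finset.range n).filter
    (fun j => rowExt n r j = true ∧ (j = 0 ∨ rowExt n r (j - 1) = false))).card

/-- The total number of maximal blocks of consecutive ones in a binary matrix. -/
def cons1 {m n : ℕ} (A : Fin m → Fin n → Bool) : ℕ :=
  ∑ i, cons1Row n (A i)

/-- Append a column of zeros to the right of a binary matrix. -/
def appendZero {m n : ℕ} (A : Fin m → Fin n → Bool) : Fin m → Fin (n + 1) → Bool :=
  fun i j => if h : (j : ℕ) < n then A i ⟨j, h⟩ else false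

/-- Hamming distance between two columns of a binary matrix. -/
def colHam {m N : ℕ} (B : Fin m → Fin N → Bool) (a b : Fin N) : ℕ :=
  hammingDist (fun i => B i a) (fun i => B i b)

/-- Weighted Hamming distance between two columns, with row weights f. -/
def wDist {m N : ℕ} (f : Fin m → ℕ) (B : Fin m → Fin N → Bool) (a b : Fin N) : ℕ :=
  ∑ k, f k * (if B k a = B k b then 0 else 1)

lemma key (n : ℕ) (d : Fin (n+1) → Bool) (h0 : d 0 = false)
    (s : Fin n → Bool) (hs : ∀ j : Fin n, d j.succ = s j) :
    (∑ t : Fin (n+1), if d t = d (t+1) then 0 else 1) = 2 * cons1Row n s := by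
  set R : Fin (n+1) → ℕ := fun t => if d t = false ∧ d (t+1) = true then 1 else 0 with hR
  set F : Fin (n+1) → ℕ := fun t => if d t = true ∧ d (t+1) = false then 1 else 0 with hF
  have hpt : ∀ t, (if d t = d (t+1) then 0 else 1) = R t + F t := by
    intro t
    simp only [hR, hF]
    cases hdt : d t <;> cases hdt1 : d (t+1) <;> simp
  have hRF : ∑ t, R t = ∑ t, F t := by
    have hz : ∑ t : Fin (n+1), (((if d (t+1) = true then (1:ℤ) else 0)) - (if d t = true then 1 else 0)) = 0 := by
      rw [Finset.sum_sub_distrib, sub_eq_zero]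
      exact Fintype.sum_equiv (Equiv.addRight 1) _ _ (fun t => rfl)
    have hpt2 : ∀ t : Fin (n+1), ((R t : ℤ) - F t) =
        ((if d (t+1) = true then (1:ℤ) else 0) - (if d t = true then 1 else 0)) := by
      intro t
      simp only [hR, hF]
      cases hdt : d t <;> cases hdt1 : d (t+1) <;> simp
    have : ∑ t : Fin (n+1), ((R t : ℤ) - F t) = 0 := by
      rw [Finset.sum_congr rfl (fun t _ => hpt2 t)]; exact hz
    rw [Finset.sum_sub_distrib, sub_eq_zero] at this
    exact_mod_cast this
  have hsum : (∑ t : Fin (n+1), if d t = d (t+1) then 0 else 1) = 2 * ∑ t, R t := by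
    rw [Finset.sum_congr rfl (fun t _ => hpt t), Finset.sum_add_distrib, ← hRF, two_mul]
  rw [hsum]
  congr 1
  -- ∑ R = cons1Row n s
  have hcard : cons1Row n s = ∑ j ∈ Finset.range n,
      if (rowExt n s j = true ∧ (j = 0 ∨ rowExt n s (j - 1) = false)) then 1 else 0 := by
    rw [cons1Row, Finset.card_filter]
  rw [hcard, ← Fin.sum_univ_eq_sum_range, Fin.sum_univ_castSucc (f := R)]
  have hlast : R (Fin.last n) = 0 := by
    have h1 : Fin.last n + 1 = 0 := by
      ext; simp [Fin.add_def]
    simp [hR, h1, h0]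
  rw [hlast, add_zero]
  apply Finset.sum_congr rfl
  intro j _
  have hcs1 : (Fin.castSucc j) + 1 = j.succ := by
    ext
    simp [Fin.add_def, Nat.mod_eq_of_lt (by omega : (j:ℕ) + 1 < n + 1)]
  have hre : rowExt n s (j:ℕ) = s j := by
    simp [rowExt]
  rcases Nat.eq_zero_or_pos (j : ℕ) with hj0 | hjpos
  · have hzc : Fin.castSucc j = 0 := by ext; simpa using hj0
    have hn : 0 < n := lt_of_le_of_lt (Nat.zero_le _) j.isLt
    have h1s : d 1 = s j := by
      have h1 : (1 : Fin (n+1)) = j.succ := by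
        apply Fin.ext
        rw [Fin.val_one', Fin.val_succ, hj0, Nat.mod_eq_of_lt (by omega)]
      rw [h1, hs]
    rw [hj0] at hre
    simp only [hR, hzc, h0, zero_add, h1s, hre, hj0]
    simp
  · have hjn : (j:ℕ) - 1 < n := by omega
    have hcs2 : Fin.castSucc j = Fin.succ ⟨(j:ℕ) - 1, hjn⟩ := by
      apply Fin.ext
      simp only [Fin.coe_castSucc, Fin.val_succ]
      omega
    have hdpr : d (Fin.castSucc j) = s ⟨(j:ℕ) - 1, hjn⟩ := by
      rw [hcs2, hs]
    have hre2 : rowExt n s ((j:ℕ) - 1) = s ⟨(j:ℕ) - 1, hjn⟩ := by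
      simp [rowExt, hjn]
    simp only [hR, hcs1, hs j, hdpr, hre, hre2]
    have hne : ¬ ((j:ℕ) = 0) := by omega
    simp [hne]
    cases hA : s ⟨(j:ℕ)-1, hjn⟩ <;> cases hB : s j <;> simp

lemma tour_eq (m n : ℕ) (A : Fin m → Fin n → Bool) (f : Fin m → ℕ)
    (σ : Equiv.Perm (Fin (n + 1))) (k₀ : Fin (n + 1)) (hk : σ k₀ = Fin.last n)
    (π : Equiv.Perm (Fin n))
    (hπ : ∀ j : Fin n, ((σ (k₀ + (Fin.ofNat (n + 1) ((j : ℕ) + 1 : ℕ)))) : ℕ) = (π j : ℕ)) :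
    ∑ k : Fin (n + 1), wDist f (appendZero A) (σ k) (σ (k + 1)) =
      2 * ∑ i, f i * cons1Row n (fun j => A i (π j)) := by
  have reindex : ∑ k : Fin (n+1), wDist f (appendZero A) (σ k) (σ (k+1))
      = ∑ t : Fin (n+1), wDist f (appendZero A) (σ (k₀ + t)) (σ (k₀ + t + 1)) :=
    (Fintype.sum_equiv (Equiv.addLeft k₀) _ _ (fun t => rfl)).symm
  rw [reindex]
  simp only [wDist]
  rw [Finset.sum_comm]
  rw [Finset.mul_sum]
  apply Finset.sum_congr rfl
  intro i _
  have hd0 : appendZero A i (σ (k₀ + 0)) = false := by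
    rw [add_zero, hk]
    simp [appendZero]
  have hds : ∀ j : Fin n, appendZero A i (σ (k₀ + j.succ)) = A i (π j) := by
    intro j
    have hcast : (Fin.ofNat (n + 1) ((j : ℕ) + 1 : ℕ)) = j.succ := by
      apply Fin.ext
      rw [Fin.val_ofNat, Fin.val_succ, Nat.mod_eq_of_lt (by omega)]
    have hv := hπ j
    rw [hcast] at hv
    have hlt : ((σ (k₀ + j.succ)) : ℕ) < n := by rw [hv]; exact (π j).isLt
    simp only [appendZero, hlt, dif_pos]
    congr 1
    apply Fin.ext
    simpa using hv
  have hkey := key n (fun t => appendZero A i (σ (k₀ + t))) hd0 (fun j => A i (π j)) hds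
  have hsum2 : ∑ t : Fin (n+1),
      f i * (if appendZero A i (σ (k₀+t)) = appendZero A i (σ (k₀+t+1)) then 0 else 1)
      = f i * ∑ t : Fin (n+1),
      (if appendZero A i (σ (k₀+(t+1))) = appendZero A i (σ (k₀+t)) then 0 else 1) := by
    rw [← Finset.mul_sum]
    congr 1
    apply Finset.sum_congr rfl
    intro t _
    rw [add_assoc]
    rcases hA : appendZero A i (σ (k₀+(t+1))) <;> rcases hB : appendZero A i (σ (k₀+t)) <;> simp [hA, hB]
  rw [hsum2]
  have hkey2 : ∑ t : Fin (n+1),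
      (if appendZero A i (σ (k₀+(t+1))) = appendZero A i (σ (k₀+t)) then 0 else 1)
      = 2 * cons1Row n (fun j => A i (π j)) := by
    rw [← hkey]
    apply Finset.sum_congr rfl
    intro t _
    rcases hA : appendZero A i (σ (k₀+(t+1))) <;> rcases hB : appendZero A i (σ (k₀+t)) <;> simp [hA, hB]
  rw [hkey2]
  ring

theorem stmt8 (m n : ℕ) (A : Fin m → Fin n → Bool) (f : Fin m → ℕ)
    (σ : Equiv.Perm (Fin (n + 1))) (k₀ : Fin (n + 1)) (hk : σ k₀ = Fin.last n)
    (π : Equiv.Perm (Fin n))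
    (hπ : ∀ j : Fin n, ((σ (k₀ + (Fin.ofNat (n + 1) ((j : ℕ) + 1 : ℕ)))) : ℕ) = (π j : ℕ)) :
    (∑ k : Fin (n + 1), wDist f (appendZero A) (σ k) (σ (k + 1)) =
        2 * ∑ i, f i * cons1Row n (fun j => A i (π j))) ∧
      ((∀ σ' : Equiv.Perm (Fin (n + 1)),
          ∑ k : Fin (n + 1), wDist f (appendZero A) (σ k) (σ (k + 1)) ≤
            ∑ k : Fin (n + 1), wDist f (appendZero A) (σ' k) (σ' (k + 1))) →
        ∀ π' : Equiv.Perm (Fin n),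
          ∑ i, f i * cons1Row n (fun j => A i (π j)) ≤
            ∑ i, f i * cons1Row n (fun j => A i (π' j))) := by
  have h1 := tour_eq m n A f σ k₀ hk π hπ
  refine ⟨h1, ?_⟩
  intro hmin π'
  set g : Fin (n+1) → Fin (n+1) :=
    fun k => Fin.cases (Fin.last n) (fun j => (π' j).castSucc) k with hg
  have hginj : Function.Injective g := by
    intro a b hab
    induction a using Fin.cases with
    | zero =>
      induction b using Fin.cases with
      | zero => rfl
      | succ j =>
        exfalso
        simp only [hg, Fin.cases_zero, Fin.cases_succ] at hab
        exact (Fin.castSucc_lt_last (π' j)).ne' hab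
    | succ j =>
      induction b using Fin.cases with
      | zero =>
        exfalso
        simp only [hg, Fin.cases_zero, Fin.cases_succ] at hab
        exact (Fin.castSucc_lt_last (π' j)).ne hab
      | succ j' =>
        simp only [hg, Fin.cases_succ] at hab
        have := π'.injective (Fin.castSucc_injective n hab)
        rw [this]
  let σ' : Equiv.Perm (Fin (n+1)) := Equiv.ofBijective g (Finite.injective_iff_bijective.mp hginj)
  have hσ'app : ∀ k, σ' k = g k := fun k => rfl
  have hk' : σ' 0 = Fin.last n := by rw [hσ'app]; simp [hg]
  have hπ' : ∀ j : Fin n, ((σ' (0 + (Fin.ofNat (n + 1) ((j : ℕ) + 1 : ℕ)))) : ℕ) = (π' j : ℕ) := by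
    intro j
    rw [zero_add]
    have hcast : (Fin.ofNat (n + 1) ((j : ℕ) + 1 : ℕ)) = j.succ := by
      apply Fin.ext
      rw [Fin.val_ofNat, Fin.val_succ, Nat.mod_eq_of_lt (by omega)]
    rw [hcast, hσ'app]
    simp [hg]
  have h2 := tour_eq m n A f σ' 0 hk' π' hπ'
  have h3 := hmin σ'
  omega
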